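/- Let 𝓑 be a basis of a Banach space X and 𝐧 a strictly increasing sequence of positive integers. Then 𝓑 is 1-(𝐧, almost greedy) if and only if 𝓑 is 1-(𝐧, SLC). -/

import Mathlib

open scoped BigOperators ENNReal NNReal

/-- The collection `𝕋(𝐧)`: pairs of finite sets `(A, D)` with `A ⊆ 𝐧`, `|A| ≤ |D|`
and `A < D ∩ 𝐧`. -/
def TPair (seq : ℕ → ℕ) (A D : Finset ℕ) : Prop :=
  (↑A : Set ℕ) ⊆ Set.range seq ∧ A.card ≤ D.card ∧
    ∀ a ∈ A, ∀ d ∈ D, d ∈ Set.range seq → a < d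

/-- The collection `𝕊(𝐧)`: pairs of finite sets `(A, D)` with `A ⊆ 𝐧` and `|A| ≤ |D|`. -/
def SPair (seq : ℕ → ℕ) (A D : Finset ℕ) : Prop :=
  (↑A : Set ℕ) ⊆ Set.range seq ∧ A.card ≤ D.card

/-- The interval `{n_{k+1}, …, n_{k+m}}` of `m` consecutive terms of the sequence `seq`
(0-indexed: `seq k, …, seq (k+m-1)`). -/
def intervalSet (seq : ℕ → ℕ) (k m : ℕ) : Finset ℕ :=
  (Finset.range m).image fun i => seq (k + i)

/-- The (1-based) index `ι(max A)` of the largest element of `A` in the sequence `seq`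
(`0` if `A` is empty). -/
noncomputable def iotaMax (seq : ℕ → ℕ) (A : Finset ℕ) : ℕ :=
  if h : A.Nonempty then sInf {i | seq i = A.max' h} + 1 else 0

/-- The collection `𝕋^ω(𝐧)`: pairs of finite sets `(A, D)` with `A ⊆ 𝐧`, `ω(A) ≤ ω(D)`
and `A < D ∩ 𝐧`. -/
def WTPair (w : Set ℕ → ℝ≥0∞) (seq : ℕ → ℕ) (A D : Finset ℕ) : Prop :=
  (↑A : Set ℕ) ⊆ Set.range seq ∧ w (↑A : Set ℕ) ≤ w (↑D : Set ℕ) ∧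
    ∀ a ∈ A, ∀ d ∈ D, d ∈ Set.range seq → a < d

/-- A (semi-normalized) basis `(e_n)` of a Banach space `X`, together with its biorthogonal
functionals `(e_n^*)`: the span of the `e_n` is norm-dense, `e_j^*(e_k) = δ_{jk}`, and the
norms of the `e_n` and `e_n^*` are bounded above and away from zero. -/
structure BasisOf (𝕜 : Type*) (X : Type*) [RCLike 𝕜] [NormedAddCommGroup X]
    [NormedSpace 𝕜 X] where
  e : ℕ → X
  coord : ℕ → X →L[𝕜] 𝕜
  dense_span : Dense (↑(Submodule.span 𝕜 (Set.range e)) : Set X)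
  biorth : ∀ j k : ℕ, coord j (e k) = if j = k then (1 : 𝕜) else 0
  norm_bounds : ∃ c₁ c₂ : ℝ, 0 < c₁ ∧ (∀ n, c₁ ≤ ‖e n‖ ∧ c₁ ≤ ‖coord n‖) ∧
    ∀ n, ‖e n‖ ≤ c₂ ∧ ‖coord n‖ ≤ c₂

namespace BasisOf

variable {𝕜 : Type*} {X : Type*} [RCLike 𝕜] [NormedAddCommGroup X] [NormedSpace 𝕜 X]
variable (B : BasisOf 𝕜 X)

/-- The projection `P_A(x) = ∑_{n ∈ A} e_n^*(x) e_n`. -/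
noncomputable def proj (A : Finset ℕ) (x : X) : X := ∑ n ∈ A, B.coord n x • B.e n

/-- `1_{εA} = ∑_{n ∈ A} ε_n e_n`. -/
noncomputable def sgnSum (ε : ℕ → 𝕜) (A : Finset ℕ) : X := ∑ n ∈ A, ε n • B.e n

/-- `1_A = ∑_{n ∈ A} e_n`. -/
noncomputable def ones (A : Finset ℕ) : X := ∑ n ∈ A, B.e n

/-- `P^𝐧_m(x) = ∑_{i=1}^m e_{n_i}^*(x) e_{n_i}`, the projection on the first `m` terms of the
subsequence given by `seq`. -/
noncomputable def projSeq (seq : ℕ → ℕ) (m : ℕ) (x : X) : X :=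
  ∑ i ∈ Finset.range m, B.coord (seq i) x • B.e (seq i)

/-- `A` is a greedy set of `x`: the coefficients inside `A` dominate those outside. -/
def IsGreedySet (x : X) (A : Finset ℕ) : Prop :=
  ∀ a ∈ A, ∀ b ∉ A, ‖B.coord b x‖ ≤ ‖B.coord a x‖

/-- The support `{n : e_n^*(x) ≠ 0}`. -/
def supp (x : X) : Set ℕ := {n | B.coord n x ≠ 0}

/-- `𝓑` is `C`-(`𝐧`, strong partially greedy):
`‖x - G_m(x)‖ ≤ C ⋅ σ̂^𝐧_m(x)` for all `x`, all `m ≥ 1` and all greedy sums. -/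
def SPGWith (seq : ℕ → ℕ) (C : ℝ) : Prop :=
  ∀ x : X, ∀ m : ℕ, 1 ≤ m → ∀ A : Finset ℕ, A.card = m → B.IsGreedySet x A →
    ∀ k : ℕ, k ≤ m → ‖x - B.proj A x‖ ≤ C * ‖x - B.projSeq seq k x‖

/-- `𝓑` is (`𝐧`, strong partially greedy). -/
def SPG (seq : ℕ → ℕ) : Prop := ∃ C : ℝ, 1 ≤ C ∧ B.SPGWith seq C

/-- `𝓑` is quasi-greedy with constant `C`. -/
def QuasiGreedyWith (C : ℝ) : Prop :=
  ∀ x : X, ∀ A : Finset ℕ, A.Nonempty → B.IsGreedySet x A → ‖B.proj A x‖ ≤ C * ‖x‖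

/-- `𝓑` is quasi-greedy. -/
def QuasiGreedy : Prop := ∃ C : ℝ, B.QuasiGreedyWith C

/-- `𝓑` is suppression quasi-greedy with constant `C`. -/
def SuppQGWith (C : ℝ) : Prop :=
  ∀ x : X, ∀ A : Finset ℕ, A.Nonempty → B.IsGreedySet x A → ‖x - B.proj A x‖ ≤ C * ‖x‖

/-- `𝓑` is `C`-(`𝐧`, PSLC). -/
def PSLCWith (seq : ℕ → ℕ) (C : ℝ) : Prop :=
  ∀ x : X, (∀ n, ‖B.coord n x‖ ≤ 1) → ∀ A D : Finset ℕ, TPair seq A D →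
    (∀ d ∈ D, B.coord d x = 0) →
    (∀ a ∈ A, ∀ j : ℕ, (j ∈ D ∨ B.coord j x ≠ 0) → j ∈ Set.range seq → a < j) →
    ∀ ε δ : ℕ → 𝕜, (∀ n, ‖ε n‖ = 1) → (∀ n, ‖δ n‖ = 1) →
      ‖x + B.sgnSum ε A‖ ≤ C * ‖x + B.sgnSum δ D‖

/-- `𝓑` is (`𝐧`, PSLC). -/
def PSLC (seq : ℕ → ℕ) : Prop := ∃ C : ℝ, 1 ≤ C ∧ B.PSLCWith seq C

/-- `𝓑` is (`𝐧`, superconservative) with constant `C`. -/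
def SuperconservativeWith (seq : ℕ → ℕ) (C : ℝ) : Prop :=
  ∀ A D : Finset ℕ, TPair seq A D →
    ∀ ε δ : ℕ → 𝕜, (∀ n, ‖ε n‖ = 1) → (∀ n, ‖δ n‖ = 1) →
      ‖B.sgnSum ε A‖ ≤ C * ‖B.sgnSum δ D‖

/-- `𝓑` is (`𝐧`, superconservative). -/
def Superconservative (seq : ℕ → ℕ) : Prop :=
  ∃ C : ℝ, 0 < C ∧ B.SuperconservativeWith seq C

/-- `𝓑` is (`𝐧`, conservative) with constant `C`. -/
def ConservativeWith (seq : ℕ → ℕ) (C : ℝ) : Prop :=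
  ∀ A D : Finset ℕ, TPair seq A D → ‖B.ones A‖ ≤ C * ‖B.ones D‖

/-- `𝓑` is (`𝐧`, conservative). -/
def Conservative (seq : ℕ → ℕ) : Prop := ∃ C : ℝ, 0 < C ∧ B.ConservativeWith seq C

/-- `𝓑` is (`𝐧`, democratic) with constant `C`. -/
def DemocraticWith (seq : ℕ → ℕ) (C : ℝ) : Prop :=
  ∀ A D : Finset ℕ, SPair seq A D → ‖B.ones A‖ ≤ C * ‖B.ones D‖

/-- `𝓑` is (`𝐧`, democratic). -/
def Democratic (seq : ℕ → ℕ) : Prop := ∃ C : ℝ, B.DemocraticWith seq C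

/-- `𝓑` is (`𝐧`, almost greedy) with constant `C`:
`‖x - G_m(x)‖ ≤ C σ̃^𝐧_m(x)` where `σ̃^𝐧_m(x) = inf {‖x - P_D(x)‖ : D ⊆ 𝐧, |D| = m}`. -/
def AlmostGreedyWith (seq : ℕ → ℕ) (C : ℝ) : Prop :=
  ∀ x : X, ∀ m : ℕ, 1 ≤ m → ∀ A : Finset ℕ, A.card = m → B.IsGreedySet x A →
    ∀ D : Finset ℕ, (↑D : Set ℕ) ⊆ Set.range seq → D.card = m →
      ‖x - B.proj A x‖ ≤ C * ‖x - B.proj D x‖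

/-- `𝓑` is (`𝐧`, almost greedy). -/
def AlmostGreedy (seq : ℕ → ℕ) : Prop := ∃ C : ℝ, 1 ≤ C ∧ B.AlmostGreedyWith seq C

/-- `𝓑` is 1-unconditional. -/
def OneUnconditional : Prop :=
  ∀ (F : Finset ℕ) (a b : ℕ → 𝕜), (∀ n, ‖a n‖ ≤ ‖b n‖) →
    ‖∑ n ∈ F, a n • B.e n‖ ≤ ‖∑ n ∈ F, b n • B.e n‖

/-- `𝓑` is `C`-(`𝐧`, consecutive almost greedy) of type I. -/
def CAGIWith (seq : ℕ → ℕ) (C : ℝ) : Prop :=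
  ∀ x : X, ∀ m : ℕ, 1 ≤ m → ∀ A : Finset ℕ, A.card = m → B.IsGreedySet x A →
    ∀ k : ℕ, ‖x - B.proj A x‖ ≤ C * ‖x - B.proj (intervalSet seq k m) x‖

/-- `𝓑` is `C`-(`𝐧`, consecutive almost greedy) of type II. -/
def CAGIIWith (seq : ℕ → ℕ) (C : ℝ) : Prop :=
  ∀ x : X, ∀ m : ℕ, 1 ≤ m → ∀ A : Finset ℕ, A.card = m → B.IsGreedySet x A →
    ∀ k p : ℕ, ((↑(intervalSet seq k p) : Set ℕ) ∩ B.supp x).ncard ≤ m →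
      ‖x - B.proj A x‖ ≤ C * ‖x - B.proj (intervalSet seq k p) x‖

/-- `𝓑` is `C`-(`𝐧`, RSLC). -/
def RSLCWith (seq : ℕ → ℕ) (C : ℝ) : Prop :=
  ∀ x : X, (∀ n, ‖B.coord n x‖ ≤ 1) → ∀ A D : Finset ℕ, SPair seq A D →
    (∀ d ∈ D, B.coord d x = 0) →
    (∀ j : ℕ, (j ∈ D ∨ B.coord j x ≠ 0) → j ∈ Set.range seq →
      (∀ a ∈ A, j < a) ∨ (∀ a ∈ A, a < j)) →
    ∀ ε δ : ℕ → 𝕜, (∀ n, ‖ε n‖ = 1) → (∀ n, ‖δ n‖ = 1) →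
      ‖x + B.sgnSum ε A‖ ≤ C * ‖x + B.sgnSum δ D‖

/-- `𝓑` is `C`-(`𝐧`, SLC). -/
def SLCWith (seq : ℕ → ℕ) (C : ℝ) : Prop :=
  ∀ x : X, (∀ n, ‖B.coord n x‖ ≤ 1) → ∀ A D : Finset ℕ, SPair seq A D →
    Disjoint A D → (∀ a ∈ A, B.coord a x = 0) → (∀ d ∈ D, B.coord d x = 0) →
    ∀ ε δ : ℕ → 𝕜, (∀ n, ‖ε n‖ = 1) → (∀ n, ‖δ n‖ = 1) →
      ‖x + B.sgnSum ε A‖ ≤ C * ‖x + B.sgnSum δ D‖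

/-- The Lebesgue-type parameter `L̂^𝐧_m`: the least constant `C ∈ [0,∞]` with
`‖x - G_m(x)‖ ≤ C σ̂^𝐧_m(x)` for all `x` and all greedy sums `G_m(x)`. -/
noncomputable def Lhat (seq : ℕ → ℕ) (m : ℕ) : ℝ≥0∞ :=
  sInf {C : ℝ≥0∞ | ∀ (x : X) (A : Finset ℕ), A.card = m → B.IsGreedySet x A →
    ∀ k : ℕ, k ≤ m →
      (‖x - B.proj A x‖₊ : ℝ≥0∞) ≤ C * (‖x - B.projSeq seq k x‖₊ : ℝ≥0∞)}

/-- The parameter `g_m^c`. -/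
noncomputable def gc (m : ℕ) : ℝ≥0∞ :=
  ⨆ (x : X) (_ : x ≠ 0) (A : Finset ℕ) (_ : A.card ≤ m) (_ : B.IsGreedySet x A),
    (‖x - B.proj A x‖₊ : ℝ≥0∞) / (‖x‖₊ : ℝ≥0∞)

/-- The parameter `g̃_m`. -/
noncomputable def gtilde (m : ℕ) : ℝ≥0∞ :=
  ⨆ (x : X) (_ : x ≠ 0) (A : Finset ℕ) (A' : Finset ℕ) (_ : A ⊆ A') (_ : A.card < A'.card)
    (_ : A'.card ≤ m) (_ : B.IsGreedySet x A) (_ : B.IsGreedySet x A'),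
    (‖B.proj A' x - B.proj A x‖₊ : ℝ≥0∞) / (‖x‖₊ : ℝ≥0∞)

/-- The parameter `sc^𝐧_m`. -/
noncomputable def scParam (seq : ℕ → ℕ) (m : ℕ) : ℝ≥0∞ :=
  ⨆ (A : Finset ℕ) (D : Finset ℕ) (_ : TPair seq A D) (_ : D.card ≤ m)
    (_ : ∀ a ∈ A, a ≤ seq (m - 1)) (ε : ℕ → 𝕜) (_ : ∀ n, ‖ε n‖ = 1)
    (δ : ℕ → 𝕜) (_ : ∀ n, ‖δ n‖ = 1),
    (‖B.sgnSum ε A‖₊ : ℝ≥0∞) / (‖B.sgnSum δ D‖₊ : ℝ≥0∞)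

/-- The parameter `ω^𝐧_m`. -/
noncomputable def omegaParam (seq : ℕ → ℕ) (m : ℕ) : ℝ≥0∞ :=
  ⨆ (x : X) (_ : ∀ n, ‖B.coord n x‖ ≤ 1) (A : Finset ℕ) (D : Finset ℕ)
    (_ : (↑A : Set ℕ) ⊆ Set.range seq) (_ : A.card ≤ D.card) (_ : D.card ≤ m)
    (_ : ∀ a ∈ A, a ≤ seq (m - 1)) (_ : ∀ d ∈ D, B.coord d x = 0)
    (_ : ∀ a ∈ A, ∀ j : ℕ, (j ∈ D ∨ B.coord j x ≠ 0) → j ∈ Set.range seq → a < j)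
    (ε : ℕ → 𝕜) (_ : ∀ n, ‖ε n‖ = 1) (δ : ℕ → 𝕜) (_ : ∀ n, ‖δ n‖ = 1),
    (‖x + B.sgnSum ε A‖₊ : ℝ≥0∞) / (‖x + B.sgnSum δ D‖₊ : ℝ≥0∞)

/-- The parameter `ω̂^𝐧_m`. -/
noncomputable def omegaHatParam (seq : ℕ → ℕ) (m : ℕ) : ℝ≥0∞ :=
  ⨆ (x : X) (_ : ∀ n, ‖B.coord n x‖ ≤ 1) (A : Finset ℕ) (D : Finset ℕ)
    (_ : (↑A : Set ℕ) ⊆ Set.range seq) (_ : A.card ≤ D.card) (_ : D.card ≤ m)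
    (_ : ∀ a ∈ A, a ≤ seq (m - 1))
    (_ : ∀ d ∈ D, B.coord d (x - B.proj A x) = 0)
    (_ : ∀ a ∈ A, ∀ j : ℕ, (j ∈ D ∨ B.coord j (x - B.proj A x) ≠ 0) →
      j ∈ Set.range seq → a < j)
    (ε : ℕ → 𝕜) (_ : ∀ n, ‖ε n‖ = 1),
    (‖x‖₊ : ℝ≥0∞) / (‖x - B.proj A x + B.sgnSum ε D‖₊ : ℝ≥0∞)

/-- `κ = sup_{j,k} ‖e_j‖ ‖e_k^*‖`. -/
noncomputable def kappa : ℝ≥0∞ :=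
  ⨆ (j : ℕ) (k : ℕ), ((‖B.e j‖₊ * ‖B.coord k‖₊ : ℝ≥0) : ℝ≥0∞)

/-- `𝓑` is `𝐬`-(`𝐧`, strong partially greedy) with constant `C`:
the strong partially greedy inequality for all orders `m` in the sequence `s`. -/
def SPGOnWith (seq : ℕ → ℕ) (s : ℕ → ℕ) (C : ℝ) : Prop :=
  ∀ x : X, ∀ i : ℕ, ∀ A : Finset ℕ, A.card = s i → B.IsGreedySet x A →
    ∀ k : ℕ, k ≤ s i → ‖x - B.proj A x‖ ≤ C * ‖x - B.projSeq seq k x‖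

/-- `𝓑` is (`λ`, `𝐧`, strong partially greedy). -/
def LamSPG (seq : ℕ → ℕ) (lam : ℝ) : Prop :=
  ∃ C : ℝ, 1 ≤ C ∧ ∀ x : X, ∀ m : ℕ, 1 ≤ m →
    ∀ A : Finset ℕ, A.card = ⌈lam * (m : ℝ)⌉₊ → B.IsGreedySet x A →
      ∀ k : ℕ, k ≤ m → ‖x - B.proj A x‖ ≤ C * ‖x - B.projSeq seq k x‖

/-- `𝓑` is (`λ`, `𝐧`, PSLC). -/
def LamPSLC (seq : ℕ → ℕ) (lam : ℝ) : Prop :=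
  ∃ C : ℝ, 1 ≤ C ∧ ∀ x : X, (∀ n, ‖B.coord n x‖ ≤ 1) →
    ∀ A D : Finset ℕ, (↑A : Set ℕ) ⊆ Set.range seq → A.card ≤ D.card →
      (lam - 1) * (iotaMax seq A : ℝ) + A.card ≤ D.card →
      (∀ d ∈ D, B.coord d x = 0) →
      (∀ a ∈ A, ∀ j : ℕ, (j ∈ D ∨ B.coord j x ≠ 0) → j ∈ Set.range seq → a < j) →
      ∀ ε δ : ℕ → 𝕜, (∀ n, ‖ε n‖ = 1) → (∀ n, ‖δ n‖ = 1) →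
        ‖x + B.sgnSum ε A‖ ≤ C * ‖x + B.sgnSum δ D‖

/-- `𝓑` is (`λ`, `𝐧`, superconservative). -/
def LamSuperconservative (seq : ℕ → ℕ) (lam : ℝ) : Prop :=
  ∃ C : ℝ, 0 < C ∧ ∀ A D : Finset ℕ, TPair seq A D →
    (lam - 1) * (iotaMax seq A : ℝ) + A.card ≤ D.card →
    ∀ ε δ : ℕ → 𝕜, (∀ n, ‖ε n‖ = 1) → (∀ n, ‖δ n‖ = 1) →
      ‖B.sgnSum ε A‖ ≤ C * ‖B.sgnSum δ D‖

/-- `𝓑` is (`λ`, `𝐧`, conservative). -/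
def LamConservative (seq : ℕ → ℕ) (lam : ℝ) : Prop :=
  ∃ C : ℝ, 0 < C ∧ ∀ A D : Finset ℕ, TPair seq A D →
    (lam - 1) * (iotaMax seq A : ℝ) + A.card ≤ D.card →
    ‖B.ones A‖ ≤ C * ‖B.ones D‖

/-- `𝓑` is `ω`-(`𝐧`, strong partially greedy) for the weight on sets `w`. -/
def WSPG (seq : ℕ → ℕ) (w : Set ℕ → ℝ≥0∞) : Prop :=
  ∃ C : ℝ, 1 ≤ C ∧ ∀ x : X, ∀ m : ℕ, 1 ≤ m → ∀ A : Finset ℕ, A.card = m →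
    B.IsGreedySet x A → ∀ m' : ℕ,
      w (↑((Finset.range m').image seq \ A) : Set ℕ) ≤
        w (↑(A \ (Finset.range m').image seq) : Set ℕ) →
      ‖x - B.proj A x‖ ≤ C * ‖x - B.proj ((Finset.range m').image seq) x‖

/-- `𝓑` is `ω`-(`𝐧`, PSLC). -/
def WPSLC (seq : ℕ → ℕ) (w : Set ℕ → ℝ≥0∞) : Prop :=
  ∃ C : ℝ, 1 ≤ C ∧ ∀ x : X, (∀ n, ‖B.coord n x‖ ≤ 1) →
    ∀ A D : Finset ℕ, WTPair w seq A D →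
      (∀ d ∈ D, B.coord d x = 0) →
      (∀ a ∈ A, ∀ j : ℕ, (j ∈ D ∨ B.coord j x ≠ 0) → j ∈ Set.range seq → a < j) →
      ∀ ε δ : ℕ → 𝕜, (∀ n, ‖ε n‖ = 1) → (∀ n, ‖δ n‖ = 1) →
        ‖x + B.sgnSum ε A‖ ≤ C * ‖x + B.sgnSum δ D‖

/-- `𝓑` is `ω`-(`𝐧`, superconservative). -/
def WSuperconservative (seq : ℕ → ℕ) (w : Set ℕ → ℝ≥0∞) : Prop :=
  ∃ C : ℝ, 0 < C ∧ ∀ A D : Finset ℕ, WTPair w seq A D →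
    ∀ ε δ : ℕ → 𝕜, (∀ n, ‖ε n‖ = 1) → (∀ n, ‖δ n‖ = 1) →
      ‖B.sgnSum ε A‖ ≤ C * ‖B.sgnSum δ D‖

/-- `𝓑` is `ω`-(`𝐧`, conservative). -/
def WConservative (seq : ℕ → ℕ) (w : Set ℕ → ℝ≥0∞) : Prop :=
  ∃ C : ℝ, 0 < C ∧ ∀ A D : Finset ℕ, WTPair w seq A D → ‖B.ones A‖ ≤ C * ‖B.ones D‖

end BasisOf

/-- A Banach space over `𝕜` equipped with a basis. -/
structure BanachWithBasis (𝕜 : Type*) [RCLike 𝕜] where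
  carrier : Type
  [grp : NormedAddCommGroup carrier]
  [mod : NormedSpace 𝕜 carrier]
  [comp : CompleteSpace carrier]
  basis : BasisOf 𝕜 carrier

attribute [instance] BanachWithBasis.grp BanachWithBasis.mod BanachWithBasis.comp

section Aux

variable {𝕜 X : Type*} [RCLike 𝕜] [NormedAddCommGroup X] [NormedSpace 𝕜 X]

open Finset

lemma coord_combo (B : BasisOf 𝕜 X) (F : Finset ℕ) (f : ℕ → 𝕜) (j : ℕ) :
    B.coord j (∑ n ∈ F, f n • B.e n) = if j ∈ F then f j else 0 := by
  rw [map_sum]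
  simp only [map_smul, B.biorth, smul_eq_mul, mul_ite, mul_one, mul_zero]
  exact Finset.sum_ite_eq F j f

lemma coord_listSum (B : BasisOf 𝕜 X) {l : List ℕ} (hl : l.Nodup) (f : ℕ → 𝕜) (j : ℕ) :
    B.coord j ((l.map fun n => f n • B.e n)).sum = if j ∈ l then f j else 0 := by
  rw [← List.sum_toFinset _ hl, coord_combo]
  simp

lemma coord_proj' (B : BasisOf 𝕜 X) (F : Finset ℕ) (x : X) (j : ℕ) :
    B.coord j (B.proj F x) = if j ∈ F then B.coord j x else 0 :=
  coord_combo B F _ j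

lemma coord_sgnSum' (B : BasisOf 𝕜 X) (ε : ℕ → 𝕜) (F : Finset ℕ) (j : ℕ) :
    B.coord j (B.sgnSum ε F) = if j ∈ F then ε j else 0 :=
  coord_combo B F _ j

lemma coord_single (B : BasisOf 𝕜 X) (c : 𝕜) (b j : ℕ) :
    B.coord j (c • B.e b) = if j = b then c else 0 := by
  simp [map_smul, B.biorth, smul_eq_mul, mul_ite]

lemma exists_unimodular_bound [CompleteSpace X] (B : BasisOf 𝕜 X) (x : X) (e : ℕ) (γ : 𝕜)
    (s : ℝ) (hγ : ‖γ‖ ≤ s) :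
    ∃ ε₀ : 𝕜, ‖ε₀‖ = 1 ∧ ‖x + γ • B.e e‖ ≤ ‖x + ((s : 𝕜) * ε₀) • B.e e‖ := by
  have hs : (0:ℝ) ≤ s := (norm_nonneg γ).trans hγ
  by_cases hz : x + γ • B.e e = 0
  · exact ⟨1, norm_one, by rw [hz]; simpa using norm_nonneg _⟩
  obtain ⟨f, hf1, hfx⟩ := exists_dual_vector 𝕜 _ (norm_ne_zero_iff.mpr hz)
  set z := f (B.e e) with hzdef
  set ε₀ : 𝕜 := if z = 0 then 1 else (starRingEnd 𝕜) z / (‖z‖ : 𝕜) with hε₀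
  have hε₀n : ‖ε₀‖ = 1 := by
    rw [hε₀]
    split_ifs with h
    · exact norm_one
    · rw [norm_div, RCLike.norm_conj, RCLike.norm_ofReal, abs_of_nonneg (norm_nonneg z),
        div_self (norm_ne_zero_iff.mpr h)]
  refine ⟨ε₀, hε₀n, ?_⟩
  have hmul : ε₀ * z = (‖z‖ : 𝕜) := by
    rw [hε₀]
    split_ifs with h
    · simp [h]
    · rw [div_mul_eq_mul_div, RCLike.conj_mul, sq]
      rw [mul_div_assoc, div_self (by exact_mod_cast norm_ne_zero_iff.mpr h), mul_one]
  have h1 : ‖x + γ • B.e e‖ = RCLike.re (f x) + RCLike.re (γ * z) := by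
    have h2 : f (x + γ • B.e e) = f x + γ * z := by rw [map_add, map_smul, smul_eq_mul]
    have := congrArg RCLike.re (hfx.symm.trans h2)
    simpa using this
  have h3 : RCLike.re (f (x + ((s : 𝕜) * ε₀) • B.e e)) = RCLike.re (f x) + s * ‖z‖ := by
    rw [map_add, map_smul, smul_eq_mul, mul_assoc, hmul, ← RCLike.ofReal_mul, map_add,
      RCLike.ofReal_re]
  have h4 : RCLike.re (γ * z) ≤ s * ‖z‖ := by
    calc RCLike.re (γ * z) ≤ ‖γ * z‖ := RCLike.re_le_norm _
    _ = ‖γ‖ * ‖z‖ := norm_mul _ _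
    _ ≤ s * ‖z‖ := mul_le_mul_of_nonneg_right hγ (norm_nonneg z)
  have h5 : RCLike.re (f (x + ((s : 𝕜) * ε₀) • B.e e)) ≤ ‖x + ((s : 𝕜) * ε₀) • B.e e‖ := by
    calc RCLike.re (f (x + ((s : 𝕜) * ε₀) • B.e e))
        ≤ ‖f (x + ((s : 𝕜) * ε₀) • B.e e)‖ := RCLike.re_le_norm _
    _ ≤ ‖f‖ * ‖x + ((s : 𝕜) * ε₀) • B.e e‖ := f.le_opNorm _
    _ = ‖x + ((s : 𝕜) * ε₀) • B.e e‖ := by rw [hf1, one_mul]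
  linarith


lemma swap_lemma [CompleteSpace X] (B : BasisOf 𝕜 X) (seq : ℕ → ℕ)
    (hS : B.SLCWith seq 1) (x : X) (e b : ℕ) (he : e ∈ Set.range seq) (hne : e ≠ b)
    (hxe : B.coord e x = 0) (hxb : B.coord b x = 0)
    (γ c : 𝕜) (hγ : ‖γ‖ ≤ ‖c‖) (hx : ∀ n, ‖B.coord n x‖ ≤ ‖c‖) :
    ‖x + γ • B.e e‖ ≤ ‖x + c • B.e b‖ := by
  rcases eq_or_ne c 0 with rfl | hc
  · have : γ = 0 := by
      have := hγ; simp only [norm_zero] at this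
      exact norm_eq_zero.mp (le_antisymm this (norm_nonneg γ))
    simp [this]
  have hs : (0:ℝ) < ‖c‖ := norm_pos_iff.mpr hc
  have hsk : ((‖c‖ : ℝ) : 𝕜) ≠ 0 := by
    exact_mod_cast (RCLike.ofReal_ne_zero).mpr (ne_of_gt hs)
  obtain ⟨ε₀, hε₀, hbound⟩ := exists_unimodular_bound B x e γ ‖c‖ hγ
  refine hbound.trans ?_
  -- now apply SLC
  set x' : X := ((‖c‖ : ℝ) : 𝕜)⁻¹ • x with hx'
  have hcoordx' : ∀ n, B.coord n x' = ((‖c‖ : ℝ) : 𝕜)⁻¹ * B.coord n x := by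
    intro n; rw [hx', map_smul, smul_eq_mul]
  have h1 := hS x' (by
      intro n
      rw [hcoordx' n, norm_mul]
      rw [norm_inv, RCLike.norm_ofReal, abs_of_nonneg (le_of_lt hs)]
      rw [inv_mul_le_iff₀ hs, mul_one]
      exact hx n)
    {e} {b} ⟨by simpa using he, by simp⟩
    (Finset.disjoint_singleton.mpr hne)
    (by intro a ha; simp only [Finset.mem_singleton] at ha
        rw [ha, hcoordx' e, hxe, mul_zero])
    (by intro d hd; simp only [Finset.mem_singleton] at hd
        rw [hd, hcoordx' b, hxb, mul_zero])
    (fun _ => ε₀) (fun _ => c / ((‖c‖ : ℝ) : 𝕜))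
    (fun _ => hε₀)
    (fun _ => by
      rw [norm_div, RCLike.norm_ofReal, abs_of_nonneg (le_of_lt hs), div_self (ne_of_gt hs)])
  rw [one_mul] at h1
  have hsg1 : B.sgnSum (fun _ => ε₀) ({e} : Finset ℕ) = ε₀ • B.e e := by
    simp [BasisOf.sgnSum]
  have hsg2 : B.sgnSum (fun _ => c / ((‖c‖ : ℝ) : 𝕜)) ({b} : Finset ℕ)
      = (c / ((‖c‖ : ℝ) : 𝕜)) • B.e b := by
    simp [BasisOf.sgnSum]
  rw [hsg1, hsg2] at h1
  have h2 := mul_le_mul_of_nonneg_left h1 (le_of_lt hs)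
  calc ‖x + (((‖c‖ : ℝ) : 𝕜) * ε₀) • B.e e‖
      = ‖(((‖c‖ : ℝ) : 𝕜)) • (x' + ε₀ • B.e e)‖ := by
        rw [smul_add, hx', smul_inv_smul₀ hsk, smul_smul]
    _ = ‖c‖ * ‖x' + ε₀ • B.e e‖ := by
        rw [norm_smul, RCLike.norm_ofReal, abs_of_nonneg (le_of_lt hs)]
    _ ≤ ‖c‖ * ‖x' + (c / ((‖c‖ : ℝ) : 𝕜)) • B.e b‖ := h2
    _ = ‖(((‖c‖ : ℝ) : 𝕜)) • (x' + (c / ((‖c‖ : ℝ) : 𝕜)) • B.e b)‖ := by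
        rw [norm_smul, RCLike.norm_ofReal, abs_of_nonneg (le_of_lt hs)]
    _ = ‖x + c • B.e b‖ := by
        rw [smul_add, hx', smul_inv_smul₀ hsk, smul_smul, mul_div_cancel₀ _ hsk]

lemma chain_lemma [CompleteSpace X] (B : BasisOf 𝕜 X) (seq : ℕ → ℕ)
    (hS : B.SLCWith seq 1) :
    ∀ (bs es : List ℕ) (y : X) (γ c : ℕ → 𝕜),
      bs.length = es.length → es.Nodup → bs.Nodup → (∀ b ∈ bs, b ∉ es) →
      (∀ e ∈ es, e ∈ Set.range seq) →
      (∀ e ∈ es, B.coord e y = 0) → (∀ b ∈ bs, B.coord b y = 0) →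
      (∀ e ∈ es, ∀ b ∈ bs, ‖γ e‖ ≤ ‖c b‖) →
      (∀ n, ∀ b ∈ bs, ‖B.coord n y‖ ≤ ‖c b‖) →
      bs.Pairwise (fun a b => ‖c a‖ ≤ ‖c b‖) →
      ‖y + ((es.map fun n => γ n • B.e n)).sum‖ ≤
        ‖y + ((bs.map fun n => c n • B.e n)).sum‖ := by
  intro bs
  induction bs with
  | nil =>
    intro es y γ c hlen hnes hnbs hdisj hrange hye hyb hγc hyc hpw
    have hes : es = [] := List.length_eq_zero_iff.mp hlen.symm
    subst hes; simp
  | cons b bs' ih =>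
    intro es y γ c hlen hnes hnbs hdisj hrange hye hyb hγc hyc hpw
    cases es with
    | nil => simp at hlen
    | cons e es' =>
      have hlen' : bs'.length = es'.length := by simpa using hlen
      have hnes' : es'.Nodup := (List.nodup_cons.mp hnes).2
      have hens : e ∉ es' := (List.nodup_cons.mp hnes).1
      have hnbs' : bs'.Nodup := (List.nodup_cons.mp hnbs).2
      have hbnbs : b ∉ bs' := (List.nodup_cons.mp hnbs).1
      have hbne : b ∉ e :: es' := hdisj b (List.mem_cons_self)
      have hne : e ≠ b := fun h => hbne (h ▸ List.mem_cons_self)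
      set x' : X := y + ((es'.map fun n => γ n • B.e n)).sum with hx'
      have hcoordx' : ∀ n, B.coord n x' = B.coord n y + (if n ∈ es' then γ n else 0) := by
        intro n; rw [hx', map_add, coord_listSum B hnes' γ n]
      have hswap : ‖x' + γ e • B.e e‖ ≤ ‖x' + c b • B.e b‖ := by
        refine swap_lemma B seq hS x' e b (hrange e (List.mem_cons_self)) hne ?_ ?_
          (γ e) (c b) (hγc e (List.mem_cons_self) b (List.mem_cons_self)) ?_
        · rw [hcoordx' e, hye e (List.mem_cons_self), if_neg hens, add_zero]
        · rw [hcoordx' b, hyb b (List.mem_cons_self),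
            if_neg (fun h => hbne (List.mem_cons_of_mem _ h)), add_zero]
        · intro n
          rw [hcoordx' n]
          by_cases hn : n ∈ es'
          · rw [if_pos hn, hye n (List.mem_cons_of_mem _ hn), zero_add]
            exact hγc n (List.mem_cons_of_mem _ hn) b (List.mem_cons_self)
          · rw [if_neg hn, add_zero]
            exact hyc n b (List.mem_cons_self)
      have hIH : ‖(y + c b • B.e b) + ((es'.map fun n => γ n • B.e n)).sum‖ ≤
          ‖(y + c b • B.e b) + ((bs'.map fun n => c n • B.e n)).sum‖ := by
        refine ih es' (y + c b • B.e b) γ c hlen' hnes' hnbs'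
          (fun b' hb' => fun h => hdisj b' (List.mem_cons_of_mem _ hb')
            (List.mem_cons_of_mem _ h))
          (fun e' he' => hrange e' (List.mem_cons_of_mem _ he')) ?_ ?_
          (fun e' he' b' hb' => hγc e' (List.mem_cons_of_mem _ he') b'
            (List.mem_cons_of_mem _ hb')) ?_ (List.pairwise_cons.mp hpw).2
        · intro e' he'
          rw [map_add, hye e' (List.mem_cons_of_mem _ he'), coord_single,
            if_neg (fun h => hbne (by rw [← h]; exact List.mem_cons_of_mem _ he')), zero_add]
        · intro b' hb'
          rw [map_add, hyb b' (List.mem_cons_of_mem _ hb'), coord_single,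
            if_neg (fun h => hbnbs (by rw [← h]; exact hb')), zero_add]
        · intro n b' hb'
          rw [map_add, coord_single]
          by_cases hn : n = b
          · rw [if_pos hn, hn, hyb b (List.mem_cons_self), zero_add]
            exact (List.pairwise_cons.mp hpw).1 b' hb'
          · rw [if_neg hn, add_zero]
            exact hyc n b' (List.mem_cons_of_mem _ hb')
      calc ‖y + (((e :: es').map fun n => γ n • B.e n)).sum‖
          = ‖x' + γ e • B.e e‖ := by
            rw [hx', List.map_cons, List.sum_cons]
            congr 1; abel
        _ ≤ ‖x' + c b • B.e b‖ := hswap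
        _ = ‖(y + c b • B.e b) + ((es'.map fun n => γ n • B.e n)).sum‖ := by
            rw [hx']; congr 1; abel
        _ ≤ ‖(y + c b • B.e b) + ((bs'.map fun n => c n • B.e n)).sum‖ := hIH
        _ = ‖y + (((b :: bs').map fun n => c n • B.e n)).sum‖ := by
            rw [List.map_cons, List.sum_cons]
            congr 1; abel



lemma proj_union (B : BasisOf 𝕜 X) {s t : Finset ℕ} (h : Disjoint s t) (x : X) :
    B.proj (s ∪ t) x = B.proj s x + B.proj t x := Finset.sum_union h

lemma slc_to_ag [CompleteSpace X] (B : BasisOf 𝕜 X) (seq : ℕ → ℕ)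
    (hS : B.SLCWith seq 1) : B.AlmostGreedyWith seq 1 := by
  intro x m hm A hA hG D hDsub hDcard
  rw [one_mul]
  classical
  set E : Finset ℕ := D \ A with hE
  set B' : Finset ℕ := A \ D with hB'
  have hcardBE : B'.card = E.card := Finset.card_sdiff_comm (hA.trans hDcard.symm)
  set es : List ℕ := E.toList with hes
  set bs : List ℕ := B'.toList.mergeSort
    (fun a b => decide (‖B.coord a x‖ ≤ ‖B.coord b x‖)) with hbs
  have hperm : bs.Perm B'.toList := List.mergeSort_perm _ _
  have hmembs : ∀ b, b ∈ bs ↔ b ∈ B' := by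
    intro b; rw [hperm.mem_iff, Finset.mem_toList]
  have hmemes : ∀ e, e ∈ es ↔ e ∈ E := fun e => Finset.mem_toList
  set y : X := x - B.proj (A ∪ D) x with hy
  have hcy : ∀ n, B.coord n y = if n ∈ A ∪ D then 0 else B.coord n x := by
    intro n
    rw [hy, map_sub, coord_proj']
    split_ifs with h <;> simp
  set f : ℕ → X := fun n => B.coord n x • B.e n with hf
  have key := chain_lemma B seq hS bs es y (fun n => B.coord n x) (fun n => B.coord n x)
    (by rw [hperm.length_eq, Finset.length_toList, Finset.length_toList, hcardBE])
    (Finset.nodup_toList E)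
    (hperm.nodup_iff.mpr (Finset.nodup_toList B'))
    (by intro b hb hbe
        rw [hmembs] at hb; rw [hmemes] at hbe
        exact (Finset.mem_sdiff.mp hbe).2 (Finset.mem_sdiff.mp hb).1)
    (by intro e he; rw [hmemes] at he
        exact hDsub (Finset.mem_coe.mpr (Finset.mem_sdiff.mp he).1))
    (by intro e he; rw [hmemes] at he
        rw [hcy, if_pos (Finset.mem_union_right _ (Finset.mem_sdiff.mp he).1)])
    (by intro b hb; rw [hmembs] at hb
        rw [hcy, if_pos (Finset.mem_union_left _ (Finset.mem_sdiff.mp hb).1)])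
    (by intro e he b hb; rw [hmemes] at he; rw [hmembs] at hb
        exact hG b (Finset.mem_sdiff.mp hb).1 e (Finset.mem_sdiff.mp he).2)
    (by intro n b hb; rw [hmembs] at hb
        rw [hcy]
        split_ifs with h
        · simpa using norm_nonneg _
        · exact hG b (Finset.mem_sdiff.mp hb).1 n
            (fun hn => h (Finset.mem_union_left _ hn)))
    (by
      have hs := List.pairwise_mergeSort
        (le := fun a b => decide (‖B.coord a x‖ ≤ ‖B.coord b x‖))
        (fun a b c hab hbc => by
          simp only [decide_eq_true_eq] at *; exact le_trans hab hbc)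
        (fun a b => by
          simp only [Bool.or_eq_true, decide_eq_true_eq]; exact le_total _ _)
        B'.toList
      rw [← hbs] at hs
      exact hs.imp (fun h => by simpa using h))
  have hsum1 : ((es.map fun n => B.coord n x • B.e n)).sum = B.proj E x := by
    rw [hes, ← List.sum_toFinset _ (Finset.nodup_toList E), Finset.toList_toFinset]
    rfl
  have hsum2 : ((bs.map fun n => B.coord n x • B.e n)).sum = B.proj B' x := by
    rw [(hperm.map _).sum_eq, ← List.sum_toFinset _ (Finset.nodup_toList B'),
      Finset.toList_toFinset]
    rfl
  have hAD1 : A ∪ D = A ∪ E := (Finset.union_sdiff_self_eq_union (s := A) (t := D)).symm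
  have hAD2 : A ∪ D = D ∪ B' := by
    rw [Finset.union_comm A D]
    exact (Finset.union_sdiff_self_eq_union (s := D) (t := A)).symm
  have hid1 : y + ((es.map fun n => B.coord n x • B.e n)).sum = x - B.proj A x := by
    rw [hsum1, hy, hAD1, proj_union B Finset.disjoint_sdiff]
    abel
  have hid2 : y + ((bs.map fun n => B.coord n x • B.e n)).sum = x - B.proj D x := by
    rw [hsum2, hy, hAD2, proj_union B Finset.disjoint_sdiff]
    abel
  rw [hid1, hid2] at key
  exact key

set_option maxHeartbeats 1000000 in
lemma ag_to_slc [CompleteSpace X] (B : BasisOf 𝕜 X) (seq : ℕ → ℕ) (hseq : StrictMono seq)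
    (hAG : B.AlmostGreedyWith seq 1) : B.SLCWith seq 1 := by
  intro x hxinf A D hSP hdisj hxA hxD ε δ hε hδ
  obtain ⟨hAsub, hcard⟩ := hSP
  rw [one_mul]
  classical
  rcases D.eq_empty_or_nonempty with rfl | hDne
  · have hAe : A = ∅ := Finset.card_eq_zero.mp (Nat.le_zero.mp (by simpa using hcard))
    subst hAe
    simp [BasisOf.sgnSum]
  obtain ⟨c₁, c₂, hc₁, hlb, hub⟩ := B.norm_bounds
  have hc₂ : 0 < c₂ := lt_of_lt_of_le hc₁ ((hlb 0).1.trans (hub 0).1)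
  refine le_of_forall_pos_le_add (fun η hη => ?_)
  set K : ℝ := 1 + (D.card : ℝ) * c₂ ^ 2 with hK
  have hK0 : 0 < K := by positivity
  set η' : ℝ := η / K with hη'
  have hη'0 : 0 < η' := div_pos hη hK0
  -- density: find v in the span close to x
  have hx_cl : x ∈ closure (↑(Submodule.span 𝕜 (Set.range B.e)) : Set X) := B.dense_span x
  obtain ⟨v, hv_mem, hv_close⟩ := Metric.mem_closure_iff.mp hx_cl η' hη'0
  obtain ⟨cf, hcf⟩ := Finsupp.mem_span_range_iff_exists_finsupp.mp hv_mem
  have hcoordv : ∀ n ∉ cf.support, B.coord n v = 0 := by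
    intro n hn
    rw [← hcf]
    have : (cf.sum fun i a => a • B.e i) = ∑ i ∈ cf.support, cf i • B.e i := rfl
    rw [this, coord_combo, if_neg hn]
  have hsmall : ∀ n ∉ cf.support, ‖B.coord n x‖ ≤ c₂ * η' := by
    intro n hn
    have : B.coord n x = B.coord n (x - v) + B.coord n v := by rw [map_sub]; ring
    rw [this, hcoordv n hn, add_zero]
    calc ‖B.coord n (x - v)‖ ≤ ‖B.coord n‖ * ‖x - v‖ := (B.coord n).le_opNorm _
    _ ≤ c₂ * η' := by
        refine mul_le_mul (hub n).2 ?_ (norm_nonneg _) (le_of_lt hc₂)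
        rw [← dist_eq_norm]
        exact le_of_lt hv_close
  set S : Finset ℕ := A ∪ D ∪ cf.support with hSdef
  set k₀ : ℕ := S.sup id + 1 with hk₀
  have hout : ∀ i : ℕ, seq (k₀ + i) ∉ S := by
    intro i hmem
    have h1 : seq (k₀ + i) ≤ S.sup id := Finset.le_sup (f := id) hmem
    have h2 : k₀ + i ≤ seq (k₀ + i) := hseq.le_apply
    omega
  set r : ℕ := D.card - A.card with hr
  set F' : Finset ℕ := (Finset.range r).image (fun i => seq (k₀ + i)) with hF'
  have hinj : Function.Injective (fun i => seq (k₀ + i)) := by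
    intro i j h
    have := hseq.injective h
    omega
  have hF'card : F'.card = r := by
    rw [hF', Finset.card_image_of_injective _ hinj, Finset.card_range]
  have hF'S : ∀ n ∈ F', n ∉ S := by
    intro n hn
    obtain ⟨i, _, rfl⟩ := Finset.mem_image.mp hn
    exact hout i
  set D' : Finset ℕ := A ∪ F' with hD'
  have hdisjAF : Disjoint A F' := by
    rw [Finset.disjoint_right]
    intro n hn hnA
    exact hF'S n hn (Finset.mem_union_left _ (Finset.mem_union_left _ hnA))
  have hD'card : D'.card = D.card := by
    rw [hD', Finset.card_union_of_disjoint hdisjAF, hF'card, hr]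
    omega
  have hD'sub : (↑D' : Set ℕ) ⊆ Set.range seq := by
    intro n hn
    rcases Finset.mem_union.mp hn with h | h
    · exact hAsub h
    · obtain ⟨i, _, rfl⟩ := Finset.mem_image.mp h
      exact ⟨k₀ + i, rfl⟩
  set u : X := x + B.sgnSum ε A + B.sgnSum δ D with hu
  have hcu : ∀ n, B.coord n u = B.coord n x + (if n ∈ A then ε n else 0) +
      (if n ∈ D then δ n else 0) := by
    intro n
    rw [hu, map_add, map_add, coord_sgnSum', coord_sgnSum']
  have hcuA : ∀ n ∈ A, B.coord n u = ε n := by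
    intro n hn
    rw [hcu, hxA n hn, if_pos hn, if_neg (Finset.disjoint_left.mp hdisj hn), zero_add, add_zero]
  have hcuD : ∀ n ∈ D, B.coord n u = δ n := by
    intro n hn
    rw [hcu, hxD n hn, if_neg (Finset.disjoint_right.mp hdisj hn), if_pos hn, zero_add, zero_add]
  have hcuO : ∀ n, n ∉ A → n ∉ D → B.coord n u = B.coord n x := by
    intro n h1 h2
    rw [hcu, if_neg h1, if_neg h2, add_zero, add_zero]
  have hgreedy : B.IsGreedySet u D := by
    intro a ha b hb
    rw [hcuD a ha, hδ a]
    by_cases hbA : b ∈ A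
    · rw [hcuA b hbA, hε b]
    · rw [hcuO b hbA hb]
      exact hxinf b
  have hm : 1 ≤ D.card := Finset.Nonempty.card_pos hDne
  have hAGres := hAG u D.card hm D rfl hgreedy D' hD'sub hD'card
  rw [one_mul] at hAGres
  -- identify the two sides
  have hprojD : B.proj D u = B.sgnSum δ D :=
    Finset.sum_congr rfl (fun n hn => by rw [hcuD n hn])
  have hprojD' : B.proj D' u = B.sgnSum ε A + B.proj F' x := by
    rw [hD', proj_union B hdisjAF]
    congr 1
    · exact Finset.sum_congr rfl (fun n hn => by rw [hcuA n hn])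
    · refine Finset.sum_congr rfl (fun n hn => ?_)
      rw [hcuO n (fun h => hF'S n hn (Finset.mem_union_left _ (Finset.mem_union_left _ h)))
        (fun h => hF'S n hn (Finset.mem_union_left _ (Finset.mem_union_right _ h)))]
  have hlhs : u - B.proj D u = x + B.sgnSum ε A := by rw [hprojD, hu]; abel
  have hrhs : u - B.proj D' u = x + B.sgnSum δ D - B.proj F' x := by rw [hprojD', hu]; abel
  rw [hlhs, hrhs] at hAGres
  refine hAGres.trans ?_
  have hbound : ‖B.proj F' x‖ ≤ η := by
    have h1 : ‖B.proj F' x‖ ≤ ∑ n ∈ F', ‖B.coord n x • B.e n‖ := norm_sum_le _ _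
    have h2 : ∀ n ∈ F', ‖B.coord n x • B.e n‖ ≤ c₂ * η' * c₂ := by
      intro n hn
      rw [norm_smul]
      refine mul_le_mul (hsmall n (fun h => hF'S n hn (Finset.mem_union_right _ h)))
        (hub n).1 (norm_nonneg _) (mul_nonneg hc₂.le hη'0.le)
    calc ‖B.proj F' x‖ ≤ ∑ n ∈ F', (c₂ * η' * c₂) := h1.trans (Finset.sum_le_sum h2)
    _ = (F'.card : ℝ) * (c₂ * η' * c₂) := by rw [Finset.sum_const, nsmul_eq_mul]
    _ ≤ (D.card : ℝ) * (c₂ * η' * c₂) := by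
        refine mul_le_mul_of_nonneg_right ?_
          (mul_nonneg (mul_nonneg hc₂.le hη'0.le) hc₂.le)
        rw [hF'card]
        exact_mod_cast Nat.sub_le D.card A.card
    _ = ((D.card : ℝ) * c₂ ^ 2) * η' := by ring
    _ ≤ K * η' := by
        refine mul_le_mul_of_nonneg_right ?_ (le_of_lt hη'0)
        rw [hK]; linarith
    _ = η := by rw [hη', mul_div_cancel₀ _ (ne_of_gt hK0)]
  calc ‖x + B.sgnSum δ D - B.proj F' x‖ ≤ ‖x + B.sgnSum δ D‖ + ‖B.proj F' x‖ :=
        norm_sub_le _ _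
  _ ≤ ‖x + B.sgnSum δ D‖ + η := by linarith

end Aux

/-- A basis is 1-(𝐧, almost greedy) iff it is 1-(𝐧, SLC). -/
theorem statement15 {𝕜 X : Type*} [RCLike 𝕜] [NormedAddCommGroup X] [NormedSpace 𝕜 X]
    [CompleteSpace X] (B : BasisOf 𝕜 X) (seq : ℕ → ℕ) (hseq : StrictMono seq) :
    B.AlmostGreedyWith seq 1 ↔ B.SLCWith seq 1 :=
  ⟨ag_to_slc B seq hseq, slc_to_ag B seq⟩
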